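/- Let 𝔤 be a finite-dimensional real Lie algebra equipped with an Ad-invariant inner product. Let A, F : ℝ³ → (Fin 3 → 𝔤) be smooth and λ : ℝ³ → 𝔤 be smooth with compact support, and set B := curl A + (1/2) • ⋆[A,A]. Assume: (i) for every smooth compactly supported v : ℝ³ → (Fin 3 → 𝔤), ∫_{ℝ³} ⟨F, v⟩ + ∫_{ℝ³} ⟨grad λ + [A,λ], v⟩ = ∫_{ℝ³} ⟨B, curl v + ⋆[A,v]⟩ (where ⟨u,w⟩ denotes Σ_μ ⟨u(μ), w(μ)⟩); (ii) ∫_{ℝ³} ⟨F, grad λ + [A,λ]⟩ = 0. Then grad λ + [A,λ] = 0 identically on ℝ³. -/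

import Mathlib

open scoped BigOperators

/-- The Levi-Civita symbol on three indices (totally antisymmetric, `ε 0 1 2 = 1`). -/
noncomputable def levicivita (i j k : Fin 3) : ℝ :=
  (((j : ℕ) : ℝ) - ((i : ℕ) : ℝ)) * (((k : ℕ) : ℝ) - ((j : ℕ) : ℝ)) *
    (((k : ℕ) : ℝ) - ((i : ℕ) : ℝ)) / 2

/-- The partial derivative `∂_μ f` on `ℝ³`. -/
noncomputable def pderiv3 {E : Type*} [NormedAddCommGroup E] [NormedSpace ℝ E]
    (μ : Fin 3) (f : EuclideanSpace ℝ (Fin 3) → E) (x : EuclideanSpace ℝ (Fin 3)) : E :=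
  fderiv ℝ f x (EuclideanSpace.single μ 1)

/-- The gradient of a `𝔤`-valued function on `ℝ³`. -/
noncomputable def grad3 {𝔤 : Type*} [NormedAddCommGroup 𝔤] [NormedSpace ℝ 𝔤]
    (q : EuclideanSpace ℝ (Fin 3) → 𝔤) (x : EuclideanSpace ℝ (Fin 3)) : Fin 3 → 𝔤 :=
  fun μ => pderiv3 μ q x

/-- The curl of a `𝔤`-valued vector field on `ℝ³`:
`(curl A)(α) = Σ_{μ,ν} ε(α,μ,ν) • ∂_μ A(ν)`. -/
noncomputable def curl3 {𝔤 : Type*} [NormedAddCommGroup 𝔤] [NormedSpace ℝ 𝔤]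
    (A : EuclideanSpace ℝ (Fin 3) → Fin 3 → 𝔤) (x : EuclideanSpace ℝ (Fin 3)) :
    Fin 3 → 𝔤 :=
  fun α => ∑ μ : Fin 3, ∑ ν : Fin 3, levicivita α μ ν • pderiv3 μ (fun y => A y ν) x

/-- The divergence of a `𝔤`-valued vector field on `ℝ³`: `div A = Σ_μ ∂_μ A(μ)`. -/
noncomputable def div3 {𝔤 : Type*} [NormedAddCommGroup 𝔤] [NormedSpace ℝ 𝔤]
    (A : EuclideanSpace ℝ (Fin 3) → Fin 3 → 𝔤) (x : EuclideanSpace ℝ (Fin 3)) : 𝔤 :=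
  ∑ μ : Fin 3, pderiv3 μ (fun y => A y μ) x

/-- The cross-bracket `⋆[v,w](α) = Σ_{μ,ν} ε(α,μ,ν) • ⁅v(μ), w(ν)⁆`, where the Lie
bracket of `𝔤` is the continuous bilinear map `br`. -/
noncomputable def crossBr {𝔤 : Type*} [NormedAddCommGroup 𝔤] [NormedSpace ℝ 𝔤]
    (br : 𝔤 →L[ℝ] 𝔤 →L[ℝ] 𝔤) (v w : Fin 3 → 𝔤) : Fin 3 → 𝔤 :=
  fun α => ∑ μ : Fin 3, ∑ ν : Fin 3, levicivita α μ ν • br (v μ) (w ν)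

/-- The dot-bracket `⋆[v,⋆w] = Σ_α ⁅v(α), w(α)⁆`, where the Lie bracket of `𝔤` is the
continuous bilinear map `br`. -/
noncomputable def dotBr {𝔤 : Type*} [NormedAddCommGroup 𝔤] [NormedSpace ℝ 𝔤]
    (br : 𝔤 →L[ℝ] 𝔤 →L[ℝ] 𝔤) (v w : Fin 3 → 𝔤) : 𝔤 :=
  ∑ α : Fin 3, br (v α) (w α)


section lagrangeHelpers

variable {𝔤 : Type*} [NormedAddCommGroup 𝔤] [NormedSpace ℝ 𝔤]

private lemma eps_sum_symm' (α : Fin 3) (S : Fin 3 → Fin 3 → 𝔤) (hS : ∀ μ ν, S μ ν = S ν μ) :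
    ∑ μ : Fin 3, ∑ ν : Fin 3, levicivita α μ ν • S μ ν = 0 := by
  fin_cases α <;>
  · simp only [Fin.sum_univ_three, levicivita]
    norm_num
    simp only [hS 2 1, hS 2 0, hS 1 0]
    abel

private lemma pderiv3_contDiff' {f : EuclideanSpace ℝ (Fin 3) → 𝔤}
    (hf : ContDiff ℝ (⊤ : ℕ∞) f) (μ : Fin 3) :
    ContDiff ℝ (⊤ : ℕ∞) (pderiv3 μ f) := by
  have h : ContDiff ℝ (⊤ : ℕ∞) (fderiv ℝ f) := by
    apply hf.fderiv_right
    exact_mod_cast le_top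
  exact h.clm_apply contDiff_const

private lemma pderiv3_add' {f g : EuclideanSpace ℝ (Fin 3) → 𝔤}
    (hf : Differentiable ℝ f) (hg : Differentiable ℝ g)
    (μ : Fin 3) (x : EuclideanSpace ℝ (Fin 3)) :
    pderiv3 μ (fun y => f y + g y) x = pderiv3 μ f x + pderiv3 μ g x := by
  simp [pderiv3, fderiv_fun_add (hf x) (hg x)]

private lemma pderiv3_br' (br : 𝔤 →L[ℝ] 𝔤 →L[ℝ] 𝔤) {f g : EuclideanSpace ℝ (Fin 3) → 𝔤}
    (hf : Differentiable ℝ f) (hg : Differentiable ℝ g) (μ : Fin 3)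
    (x : EuclideanSpace ℝ (Fin 3)) :
    pderiv3 μ (fun y => br (f y) (g y)) x
      = br (pderiv3 μ f x) (g x) + br (f x) (pderiv3 μ g x) := by
  have hc : HasFDerivAt (fun y => br (f y)) (br.comp (fderiv ℝ f x)) x :=
    br.hasFDerivAt.comp x (hf x).hasFDerivAt
  have h := hc.clm_apply (hg x).hasFDerivAt
  rw [pderiv3, h.fderiv]
  simp [pderiv3]
  abel

private lemma pderiv3_symm' {f : EuclideanSpace ℝ (Fin 3) → 𝔤}
    (hf : ContDiff ℝ (⊤ : ℕ∞) f) (μ ν : Fin 3) (x : EuclideanSpace ℝ (Fin 3)) :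
    pderiv3 μ (fun y => pderiv3 ν f y) x = pderiv3 ν (fun y => pderiv3 μ f y) x := by
  have hf' : ContDiff ℝ (⊤ : ℕ∞) (fderiv ℝ f) := by
    apply hf.fderiv_right; exact_mod_cast le_top
  have hd : pderiv3 μ (fun y => pderiv3 ν f y) x
      = fderiv ℝ (fderiv ℝ f) x (EuclideanSpace.single μ 1) (EuclideanSpace.single ν 1) := by
    rw [pderiv3]
    have : (fun y => pderiv3 ν f y) = fun y => (fderiv ℝ f y) (EuclideanSpace.single ν 1) := rfl
    rw [this, fderiv_clm_apply (hf'.differentiable (by simp) x)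
      (differentiableAt_const _)]
    simp
  have hd2 : pderiv3 ν (fun y => pderiv3 μ f y) x
      = fderiv ℝ (fderiv ℝ f) x (EuclideanSpace.single ν 1) (EuclideanSpace.single μ 1) := by
    rw [pderiv3]
    have : (fun y => pderiv3 μ f y) = fun y => (fderiv ℝ f y) (EuclideanSpace.single μ 1) := rfl
    rw [this, fderiv_clm_apply (hf'.differentiable (by simp) x)
      (differentiableAt_const _)]
    simp
  rw [hd, hd2]
  exact second_derivative_symmetric
    (fun y => ((hf.differentiable (by simp)) y).hasFDerivAt)
    ((hf'.differentiable (by simp) x).hasFDerivAt) _ _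

end lagrangeHelpers

open MeasureTheory

set_option maxHeartbeats 2000000 in
/-- if `(A, F, λ)` satisfy the Lagrange-multiplier weak relation (i) for
all smooth compactly supported test fields `v`, and the orthogonality relation (ii),
then `grad λ + [A,λ] = 0` identically on `ℝ³`. -/
theorem lagrange_multiplier_vanishing {𝔤 : Type*} [NormedAddCommGroup 𝔤]
    [NormedSpace ℝ 𝔤] [FiniteDimensional ℝ 𝔤]
    (br : 𝔤 →L[ℝ] 𝔤 →L[ℝ] 𝔤)
    (br_alt : ∀ a : 𝔤, br a a = 0)
    (br_jacobi : ∀ a b c : 𝔤, br a (br b c) + br b (br c a) + br c (br a b) = 0)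
    (ip : 𝔤 →ₗ[ℝ] 𝔤 →ₗ[ℝ] ℝ)
    (ip_symm : ∀ a b : 𝔤, ip a b = ip b a)
    (ip_pos : ∀ a : 𝔤, a ≠ 0 → 0 < ip a a)
    (ip_ad : ∀ a b c : 𝔤, ip (br a b) c = ip a (br b c))
    (A F : EuclideanSpace ℝ (Fin 3) → Fin 3 → 𝔤)
    (lam : EuclideanSpace ℝ (Fin 3) → 𝔤)
    (hA : ContDiff ℝ (⊤ : ℕ∞) A) (hF : ContDiff ℝ (⊤ : ℕ∞) F)
    (hlam : ContDiff ℝ (⊤ : ℕ∞) lam) (hlam_supp : HasCompactSupport lam)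
    (B : EuclideanSpace ℝ (Fin 3) → Fin 3 → 𝔤)
    (hB : B = fun y α => curl3 A y α + (1/2 : ℝ) • crossBr br (A y) (A y) α)
    (weak_eq : ∀ v : EuclideanSpace ℝ (Fin 3) → Fin 3 → 𝔤,
      ContDiff ℝ (⊤ : ℕ∞) v → HasCompactSupport v →
      (∫ x : EuclideanSpace ℝ (Fin 3), ∑ μ : Fin 3, ip (F x μ) (v x μ))
        + (∫ x : EuclideanSpace ℝ (Fin 3),
            ∑ μ : Fin 3, ip (grad3 lam x μ + br (A x μ) (lam x)) (v x μ))
        = ∫ x : EuclideanSpace ℝ (Fin 3),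
            ∑ μ : Fin 3, ip (B x μ) (curl3 v x μ + crossBr br (A x) (v x) μ))
    (orth_eq : (∫ x : EuclideanSpace ℝ (Fin 3),
        ∑ μ : Fin 3, ip (F x μ) (grad3 lam x μ + br (A x μ) (lam x))) = 0) :
    ∀ (x : EuclideanSpace ℝ (Fin 3)) (μ : Fin 3),
      grad3 lam x μ + br (A x μ) (lam x) = 0 := by
  classical
  set G : EuclideanSpace ℝ (Fin 3) → Fin 3 → 𝔤 :=
    fun x μ => grad3 lam x μ + br (A x μ) (lam x) with hGdef
  have hlam_d : Differentiable ℝ lam := hlam.differentiable (by simp)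
  have hAν : ∀ ν : Fin 3, ContDiff ℝ (⊤ : ℕ∞) (fun y => A y ν) := fun ν =>
    (contDiff_pi.mp hA) ν
  have hbrA : ∀ ν : Fin 3, ContDiff ℝ (⊤ : ℕ∞) (fun y => br (A y ν) (lam y)) := fun ν =>
    (br.contDiff.comp (hAν ν)).clm_apply hlam
  have hGν : ∀ ν : Fin 3, ContDiff ℝ (⊤ : ℕ∞) (fun y => G y ν) := fun ν =>
    (pderiv3_contDiff' hlam ν).add (hbrA ν)
  have hG_smooth : ContDiff ℝ (⊤ : ℕ∞) G := contDiff_pi.mpr hGν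
  have hG_zero : ∀ x, x ∉ tsupport lam → G x = 0 := by
    intro x hx
    have hlx : lam x = 0 := image_eq_zero_of_notMem_tsupport hx
    have hfx : fderiv ℝ lam x = 0 := by
      by_contra h
      exact hx (support_fderiv_subset ℝ (Function.mem_support.mpr h))
    funext μ
    simp [hGdef, grad3, pderiv3, hfx, hlx]
  have hG_supp : HasCompactSupport G := HasCompactSupport.intro hlam_supp hG_zero
  -- bracket algebra
  have br_anti : ∀ a b : 𝔤, br b a = - br a b := by
    intro a b
    have h := br_alt (a + b)
    simp only [map_add, ContinuousLinearMap.add_apply, br_alt, zero_add, add_zero] at h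
    exact eq_neg_of_add_eq_zero_left h
  have comm : ∀ a b c : 𝔤, br a (br b c) = br (br a b) c + br b (br a c) := by
    intro a b c
    have hj := br_jacobi a b c
    rw [show br c a = - br a c from br_anti a c, map_neg,
      show br c (br a b) = - br (br a b) c from br_anti _ _] at hj
    have hj2 : br (br a b) c + br b (br a c) - br a (br b c) = 0 := by
      rw [← neg_eq_zero, ← hj]; abel
    exact (sub_eq_zero.mp hj2).symm
  -- expansion of the derivative of G
  have hexp : ∀ (x : EuclideanSpace ℝ (Fin 3)) (μ ν : Fin 3),
      pderiv3 μ (fun y => pderiv3 ν lam y + br (A y ν) (lam y)) x =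
        pderiv3 μ (fun y => pderiv3 ν lam y) x
        + (br (pderiv3 μ (fun y => A y ν) x) (lam x)
           + br (A x ν) (pderiv3 μ lam x)) := by
    intro x μ ν
    rw [pderiv3_add'
        ((pderiv3_contDiff' hlam ν).differentiable (by simp))
        ((hbrA ν).differentiable (by simp)),
      pderiv3_br' br ((hAν ν).differentiable (by simp)) hlam_d]
  -- key pointwise identity
  have hkey : ∀ (x : EuclideanSpace ℝ (Fin 3)) (α : Fin 3),
      curl3 G x α + crossBr br (A x) (G x) α = br (B x α) (lam x) := by
    intro x α
    rw [hB]
    simp only [curl3, crossBr, hGdef, grad3]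
    simp only [hexp x]
    have hT : ∀ a b : Fin 3, br (A x a) (br (A x b) (lam x))
        = br (br (A x a) (A x b)) (lam x) + br (A x b) (br (A x a) (lam x)) :=
      fun a b => comm _ _ _
    fin_cases α <;>
    · simp only [Fin.sum_univ_three, levicivita]
      norm_num
      try simp only [map_add, _root_.map_smul, map_neg, ContinuousLinearMap.add_apply,
        ContinuousLinearMap.smul_apply, ContinuousLinearMap.neg_apply, smul_add]
      first
      | (rw [pderiv3_symm' hlam 2 1 x, hT 1 2,
             show br (A x 2) (A x 1) = - br (A x 1) (A x 2) from br_anti _ _,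
             map_neg, ContinuousLinearMap.neg_apply]; module)
      | (rw [pderiv3_symm' hlam 2 0 x, hT 2 0,
             show br (A x 0) (A x 2) = - br (A x 2) (A x 0) from br_anti _ _,
             map_neg, ContinuousLinearMap.neg_apply]; module)
      | (rw [pderiv3_symm' hlam 1 0 x, hT 0 1,
             show br (A x 1) (A x 0) = - br (A x 0) (A x 1) from br_anti _ _,
             map_neg, ContinuousLinearMap.neg_apply]; module)
  -- the right side of the weak equation vanishes for v = G
  have hzero : ∀ x : EuclideanSpace ℝ (Fin 3),
      ∑ μ : Fin 3, ip (B x μ) (curl3 G x μ + crossBr br (A x) (G x) μ) = 0 := by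
    intro x
    refine Finset.sum_eq_zero fun μ _ => ?_
    rw [hkey x μ, ← ip_ad, br_alt]
    simp
  -- apply the weak equation
  have hweak := weak_eq G hG_smooth hG_supp
  have hrhs : (∫ x : EuclideanSpace ℝ (Fin 3),
      ∑ μ : Fin 3, ip (B x μ) (curl3 G x μ + crossBr br (A x) (G x) μ)) = 0 := by
    simp only [hzero, integral_zero]
  have horth : (∫ x : EuclideanSpace ℝ (Fin 3),
      ∑ μ : Fin 3, ip (F x μ) (G x μ)) = 0 := by
    rw [hGdef]; exact orth_eq
  have hmain : (∫ x : EuclideanSpace ℝ (Fin 3),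
      ∑ μ : Fin 3, ip (G x μ) (G x μ)) = 0 := by
    have h2 : (∫ x : EuclideanSpace ℝ (Fin 3),
        ∑ μ : Fin 3, ip (grad3 lam x μ + br (A x μ) (lam x)) (G x μ))
        = ∫ x : EuclideanSpace ℝ (Fin 3), ∑ μ : Fin 3, ip (G x μ) (G x μ) := by
      rw [hGdef]
    rw [horth, h2, hrhs] at hweak
    linarith
  -- continuity of the integrand
  have ip_nonneg : ∀ a : 𝔤, 0 ≤ ip a a := by
    intro a
    by_cases h : a = 0
    · simp [h]
    · exact (ip_pos a h).le
  set ipC : 𝔤 →L[ℝ] 𝔤 →L[ℝ] ℝ :=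
    LinearMap.toContinuousLinearMap
      ((LinearMap.toContinuousLinearMap :
          (𝔤 →ₗ[ℝ] ℝ) ≃ₗ[ℝ] (𝔤 →L[ℝ] ℝ)).toLinearMap.comp ip) with hipC
  have hipC_eq : ∀ a b : 𝔤, ipC a b = ip a b := fun a b => rfl
  set f : EuclideanSpace ℝ (Fin 3) → ℝ :=
    fun x => ∑ μ : Fin 3, ip (G x μ) (G x μ) with hfdef
  have hf_cont : Continuous f := by
    apply continuous_finset_sum
    intro μ _
    have hGc : Continuous (fun x => G x μ) := (hGν μ).continuous
    have : (fun x => ip (G x μ) (G x μ)) = fun x => ipC (G x μ) (G x μ) := by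
      funext x; rw [hipC_eq]
    rw [this]
    exact ipC.continuous₂.comp (hGc.prodMk hGc)
  have hf_nonneg : ∀ x, 0 ≤ f x := fun x =>
    Finset.sum_nonneg fun μ _ => ip_nonneg _
  have hf_supp : HasCompactSupport f := by
    apply HasCompactSupport.intro hlam_supp
    intro x hx
    simp [hfdef, hG_zero x hx]
  have hf_int : Integrable f := hf_cont.integrable_of_hasCompactSupport hf_supp
  have hf_ae : f =ᵐ[volume] 0 :=
    (integral_eq_zero_iff_of_nonneg hf_nonneg hf_int).mp hmain
  have hf_eq : f = 0 :=
    (Continuous.ae_eq_iff_eq volume hf_cont continuous_const).mp hf_ae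
  intro x μ
  have hx : f x = 0 := by rw [hf_eq]; rfl
  have hterm : ip (G x μ) (G x μ) = 0 :=
    (Finset.sum_eq_zero_iff_of_nonneg (fun ν _ => ip_nonneg _)).mp hx μ (Finset.mem_univ μ)
  have hGx : G x μ = 0 := by
    by_contra h
    exact (ip_pos _ h).ne' hterm
  rw [hGdef] at hGx
  exact hGx
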